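/- Let n ≥ 1, let a_0, …, a_n be real numbers, let a ∈ [−1,1] and r ≥ 0. Let u_k(a) be the Clenshaw sequence of p at a: u_{n+1}(a) = 0, u_n(a) = a_n, u_k(a) = 2a·u_{k+1}(a) − u_{k+2}(a) + a_k for 1 ≤ k ≤ n−1. Define e_n = 0, e_k = 2r·|u_{k+1}(a)| + e_{k+1} for n−1 ≥ k ≥ 1, and e_0 = r·|u_1(a)| + e_1. Then for every x ∈ [−1,1] with |x − a| ≤ r, one has |p(x) − p(a)| ≤ e_0; equivalently |p(x) − p(a)| ≤ r·|u_1(a)| + 2r·∑_{i=2}^n |u_i(a)|. -/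
import Mathlib

open Polynomial Finset

lemma abs_T_eval_le_one (m : ℤ) (x : ℝ) (hx : x ∈ Set.Icc (-1 : ℝ) 1) :
    |(Polynomial.Chebyshev.T ℝ m).eval x| ≤ 1 := by
  have h := Polynomial.Chebyshev.T_real_cos (Real.arccos x) m
  rw [Real.cos_arccos hx.1 hx.2] at h
  rw [h]; exact Real.abs_cos_le_one _

theorem ball_clenshaw_backward_correct (n : ℕ) (hn : 1 ≤ n) (a : ℕ → ℝ)
    (c : ℝ) (hc : c ∈ Set.Icc (-1 : ℝ) 1) (r : ℝ) (hr : 0 ≤ r)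
    (u : ℕ → ℝ) (hun1 : u (n + 1) = 0) (hun : u n = a n)
    (hurec : ∀ k, 1 ≤ k → k ≤ n - 1 → u k = 2 * c * u (k + 1) - u (k + 2) + a k)
    (e : ℕ → ℝ) (hen : e n = 0)
    (herec : ∀ k, 1 ≤ k → k ≤ n - 1 → e k = 2 * r * |u (k + 1)| + e (k + 1))
    (he0 : e 0 = r * |u 1| + e 1) :
    ∀ x : ℝ, x ∈ Set.Icc (-1 : ℝ) 1 → |x - c| ≤ r →
      |(∑ i ∈ Finset.range (n + 1), a i * (Polynomial.Chebyshev.T ℝ i).eval x) -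
        (∑ i ∈ Finset.range (n + 1), a i * (Polynomial.Chebyshev.T ℝ i).eval c)| ≤ e 0 ∧
      |(∑ i ∈ Finset.range (n + 1), a i * (Polynomial.Chebyshev.T ℝ i).eval x) -
        (∑ i ∈ Finset.range (n + 1), a i * (Polynomial.Chebyshev.T ℝ i).eval c)| ≤
        r * |u 1| + 2 * r * ∑ i ∈ Finset.Icc 2 n, |u i| := by
  -- key Clenshaw identity
  have key : ∀ (y : ℝ) (d m : ℕ), 1 ≤ m → m + d = n →
      ∑ i ∈ Finset.Icc m n, a i * (Polynomial.Chebyshev.T ℝ i).eval y =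
        u m * (Polynomial.Chebyshev.T ℝ m).eval y
          - u (m + 1) * (Polynomial.Chebyshev.T ℝ ((m : ℤ) - 1)).eval y
          + 2 * (y - c) * ∑ k ∈ Finset.Icc (m + 1) n,
              u k * (Polynomial.Chebyshev.T ℝ ((k : ℤ) - 1)).eval y := by
    intro y d
    induction d with
    | zero =>
      intro m hm hmn
      simp only [Nat.add_zero] at hmn
      subst hmn
      rw [Finset.Icc_self, Finset.Icc_eq_empty (by omega)]
      simp [hun, hun1]
    | succ d ih =>
      intro m hm hmn
      have hsplit : ∀ (p q : ℕ), p ≤ q → Finset.Icc p q = insert p (Finset.Icc (p + 1) q) := by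
        intro p q h; ext j; simp; omega
      rw [hsplit m n (by omega), Finset.sum_insert (by simp),
        ih (m + 1) (by omega) (by omega),
        hsplit (m + 1) n (by omega), Finset.sum_insert (by simp)]
      have ha : a m = u m - 2 * c * u (m + 1) + u (m + 2) := by
        have := hurec m hm (by omega); linarith
      have hT : (Polynomial.Chebyshev.T ℝ (↑(m + 1) : ℤ)).eval y =
          2 * y * (Polynomial.Chebyshev.T ℝ (m : ℤ)).eval y
            - (Polynomial.Chebyshev.T ℝ ((m : ℤ) - 1)).eval y := by
        have := Polynomial.Chebyshev.T_add_two ℝ ((m : ℤ) - 1)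
        have h2 : ((m : ℤ) - 1 + 2) = (↑(m + 1) : ℤ) := by push_cast; ring
        have h3 : ((m : ℤ) - 1 + 1) = (m : ℤ) := by ring
        rw [h2, h3] at this
        rw [this]; simp [mul_assoc]
      have hcast : ((↑(m + 1) : ℤ) - 1) = (m : ℤ) := by push_cast; ring
      rw [hcast]
      rw [ha, hT]
      ring
  -- closed form for e
  have ekey : ∀ (d m : ℕ), 1 ≤ m → m + d = n →
      e m = 2 * r * ∑ k ∈ Finset.Icc (m + 1) n, |u k| := by
    intro d
    induction d with
    | zero =>
      intro m hm hmn
      simp only [Nat.add_zero] at hmn; subst hmn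
      rw [Finset.Icc_eq_empty (by omega)]; simpa using hen
    | succ d ih =>
      intro m hm hmn
      have hsplit : Finset.Icc (m + 1) n = insert (m + 1) (Finset.Icc (m + 2) n) := by
        ext j; simp; omega
      rw [herec m hm (by omega), ih (m + 1) (by omega) (by omega), hsplit,
        Finset.sum_insert (by simp)]
      ring
  intro x hx hxc
  have hrange : ∀ y : ℝ, ∑ i ∈ Finset.range (n + 1), a i * (Polynomial.Chebyshev.T ℝ i).eval y =
      a 0 * (Polynomial.Chebyshev.T ℝ (0 : ℤ)).eval y
        + ∑ i ∈ Finset.Icc 1 n, a i * (Polynomial.Chebyshev.T ℝ i).eval y := by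
    intro y
    have : Finset.range (n + 1) = insert 0 (Finset.Icc 1 n) := by ext j; simp; omega
    rw [this, Finset.sum_insert (by simp)]
    norm_num
  have hx1 := key x (n - 1) 1 le_rfl (by omega)
  have hc1 := key c (n - 1) 1 le_rfl (by omega)
  have hdiff : (∑ i ∈ Finset.range (n + 1), a i * (Polynomial.Chebyshev.T ℝ i).eval x) -
      (∑ i ∈ Finset.range (n + 1), a i * (Polynomial.Chebyshev.T ℝ i).eval c) =
      u 1 * (x - c) + 2 * (x - c) * ∑ k ∈ Finset.Icc 2 n,
        u k * (Polynomial.Chebyshev.T ℝ ((k : ℤ) - 1)).eval x := by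
    rw [hrange x, hrange c, hx1, hc1]
    simp only [Polynomial.Chebyshev.T_zero, Polynomial.Chebyshev.T_one]
    push_cast
    simp [Polynomial.Chebyshev.T_one]
    ring
  have hsum : |∑ k ∈ Finset.Icc 2 n, u k * (Polynomial.Chebyshev.T ℝ ((k : ℤ) - 1)).eval x|
      ≤ ∑ k ∈ Finset.Icc 2 n, |u k| := by
    refine (Finset.abs_sum_le_sum_abs _ _).trans (Finset.sum_le_sum fun k _ => ?_)
    rw [abs_mul]
    calc |u k| * |(Polynomial.Chebyshev.T ℝ ((k : ℤ) - 1)).eval x|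
        ≤ |u k| * 1 := by
          exact mul_le_mul_of_nonneg_left (abs_T_eval_le_one _ x hx) (abs_nonneg _)
      _ = |u k| := mul_one _
  have hbound : |(∑ i ∈ Finset.range (n + 1), a i * (Polynomial.Chebyshev.T ℝ i).eval x) -
      (∑ i ∈ Finset.range (n + 1), a i * (Polynomial.Chebyshev.T ℝ i).eval c)| ≤
      r * |u 1| + 2 * r * ∑ i ∈ Finset.Icc 2 n, |u i| := by
    rw [hdiff]
    refine (abs_add_le _ _).trans ?_
    have h1 : |u 1 * (x - c)| ≤ r * |u 1| := by
      rw [abs_mul, mul_comm]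
      exact mul_le_mul_of_nonneg_right hxc (abs_nonneg _)
    have h2 : |2 * (x - c) * ∑ k ∈ Finset.Icc 2 n,
        u k * (Polynomial.Chebyshev.T ℝ ((k : ℤ) - 1)).eval x| ≤
        2 * r * ∑ i ∈ Finset.Icc 2 n, |u i| := by
      rw [abs_mul, abs_mul, abs_two]
      exact mul_le_mul (by linarith) hsum (abs_nonneg _) (by linarith)
    linarith
  have he0' : e 0 = r * |u 1| + 2 * r * ∑ i ∈ Finset.Icc 2 n, |u i| := by
    rw [he0, ekey (n - 1) 1 le_rfl (by omega)]
  refine ⟨?_, hbound⟩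
  rw [he0']
  exact hbound
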